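/- Define operators on ℚ(q)[X₀,X₁] on monomials by e(X₀^aX₁^b) = [b] X₀^{a+1}X₁^{b-1} and t(X₀^aX₁^b) = −[b] X₀^aX₁^b. Then t²e + e t² = (q + q⁻¹) t e t + e as operators. -/

import Mathlib

noncomputable section

/-- The field ℚ(q) of rational functions over ℚ. -/
abbrev K : Type := RatFunc ℚ

/-- The indeterminate q. -/
def q : K := RatFunc.X

/-- The quantum integer [m]. -/
def qint (m : ℤ) : K := (q ^ m - q ^ (-m)) / (q - q⁻¹)

/-- The monomial X₀^a X₁^b in ℚ(q)[X₀,X₁]. -/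
def mono (a b : ℕ) : MvPolynomial (Fin 2) K :=
  MvPolynomial.monomial (Finsupp.single 0 a + Finsupp.single 1 b) (1 : K)

lemma q_ne_zero : q ≠ 0 := RatFunc.X_ne_zero

lemma qden_ne : q - q⁻¹ ≠ 0 := by
  intro h
  have h2 : q * q - 1 = 0 := by
    have := congrArg (· * q) h
    simpa [sub_mul, inv_mul_cancel₀ q_ne_zero] using this
  have h3 : algebraMap (Polynomial ℚ) K (Polynomial.X * Polynomial.X - 1)
      = algebraMap (Polynomial ℚ) K 0 := by
    simpa [map_sub, map_mul, q, RatFunc.algebraMap_X] using h2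
  have h4 := (RatFunc.algebraMap_injective ℚ) h3
  have := congrArg (Polynomial.eval 0) h4
  simp at this

lemma key (n : ℤ) :
    qint n ^ 2 + qint (n+1) ^ 2 - (q + q⁻¹) * (qint (n+1) * qint n) = 1 := by
  have hq := q_ne_zero
  have hd := qden_ne
  have hu : q ^ n * q ^ (-n) = 1 := by
    rw [← zpow_add₀ hq]; simp
  have hv : q * q⁻¹ = 1 := mul_inv_cancel₀ hq
  have hnum : (q^n - q^(-n))^2 + (q^(n+1) - q^(-(n+1)))^2
      - (q+q⁻¹)*((q^(n+1)-q^(-(n+1)))*(q^n-q^(-n))) = (q-q⁻¹)^2 := by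
    simp only [neg_add, zpow_add₀ hq, zpow_one, zpow_neg_one]
    linear_combination (q^2 + q⁻¹^2 - 2) * hu - ((q^n)^2 + (q^(-n))^2 - 2) * hv
  rw [qint, qint, div_pow, div_pow, div_mul_div_comm, ← pow_two, mul_div_assoc',
    ← add_div, ← sub_div, hnum, div_self (pow_ne_zero _ hd)]

lemma fin2_decomp (d : Fin 2 →₀ ℕ) :
    d = Finsupp.single 0 (d 0) + Finsupp.single 1 (d 1) := by
  ext i; fin_cases i <;> simp

/-- the relation t²e + et² = (q+q⁻¹)tet + e in the
oscillator representation of ⁱU(A_{2r+2,1}). -/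
theorem stmt15 (e t : Module.End K (MvPolynomial (Fin 2) K))
    (he : ∀ a b : ℕ, e (mono a b) = qint (b : ℤ) • mono (a + 1) (b - 1))
    (ht : ∀ a b : ℕ, t (mono a b) = (-qint (b : ℤ)) • mono a b) :
    t ^ 2 * e + e * t ^ 2 = (q + q⁻¹) • (t * e * t) + e := by
  apply LinearMap.ext
  intro p
  induction p using MvPolynomial.induction_on' with
  | add p1 p2 hp1 hp2 => simp only [map_add, hp1, hp2]
  | monomial d c =>
    have hm : (MvPolynomial.monomial d) c = c • mono (d 0) (d 1) := by
      rw [mono, MvPolynomial.smul_monomial, smul_eq_mul, mul_one, ← fin2_decomp d]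
    set a := d 0; set b := d 1
    suffices h : (t^2*e + e*t^2) (mono a b) = ((q+q⁻¹) • (t*e*t) + e) (mono a b) by
      rw [hm, map_smul, map_smul, h]
    rcases b with _ | k
    · have h0 : qint (0:ℤ) = 0 := by simp [qint]
      simp [pow_two, LinearMap.add_apply, Module.End.mul_apply, LinearMap.smul_apply,
        he, ht, h0]
    · have hsc : qint ((k:ℤ)+1) * qint (k:ℤ)^2 + qint ((k:ℤ)+1)^3
          = (q+q⁻¹) * (qint ((k:ℤ)+1)^2 * qint (k:ℤ)) + qint ((k:ℤ)+1) := by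
        linear_combination qint ((k:ℤ)+1) * key (k:ℤ)
      simp only [pow_two, LinearMap.add_apply, Module.End.mul_apply, LinearMap.smul_apply,
        he, ht, map_smul, smul_smul, Nat.add_sub_cancel, Nat.cast_add, Nat.cast_one]
      rw [← add_smul, ← add_smul]
      congr 1
      linear_combination hsc
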